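/- A finite bipartite Helly graph G satisfies the pairing property if and only if for every vertex u of G, the subgraph of G induced by the ball B_2(u) of radius 2 centered at u satisfies the pairing property (with respect to its own shortest-path metric). The same equivalence holds with 'pairing property' replaced by 'double-pairing property'. -/

import Mathlib

namespace ArxivABC

variable {V : Type*}

/-- The metric interval `I(u,v)` between two vertices `u` and `v`. -/
def interval (G : SimpleGraph V) (u v : V) : Set V :=
  {w | G.dist u w + G.dist w v = G.dist u v}

/-- An ABC-function on `G`: a consensus function (profiles are finite multisets of
vertices, so anonymity (A) is built in) returning nonempty sets of vertices, and satisfying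
betweenness (B) and consistency (C). -/
structure IsABC (G : SimpleGraph V) (L : Multiset V → Set V) : Prop where
  nonempty : ∀ π : Multiset V, (L π).Nonempty
  betweenness : ∀ u v : V, L {u, v} = interval G u v
  consistency : ∀ π ρ : Multiset V, (L π ∩ L ρ).Nonempty → L (π + ρ) = L π ∩ L ρ

/-- The total distance `F_π(v)` of a vertex `v` with respect to a profile `π`. -/
noncomputable def cost (G : SimpleGraph V) (π : Multiset V) (v : V) : ℕ :=
  (π.map (G.dist v)).sum

/-- The median set of a profile. -/
def median (G : SimpleGraph V) (π : Multiset V) : Set V :=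
  {v | ∀ w, cost G π v ≤ cost G π w}

/-- `P` is a pairing of the (even) profile `π`: a partition of the multiset `π`
into pairs. -/
def IsPairing (π : Multiset V) (P : Multiset (V × V)) : Prop :=
  P.map Prod.fst + P.map Prod.snd = π

/-- `D_π(P) = Σ_{{a,b} ∈ P} d(a,b)`. -/
noncomputable def pairingCost (G : SimpleGraph V) (P : Multiset (V × V)) : ℕ :=
  (P.map fun p => G.dist p.1 p.2).sum

/-- The profile `π` admits a perfect pairing: a pairing `P` and a vertex `v` with
`D_π(P) = F_π(v)`. -/
def HasPerfectPairing (G : SimpleGraph V) (π : Multiset V) : Prop :=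
  ∃ (P : Multiset (V × V)) (v : V), IsPairing π P ∧ pairingCost G P = cost G π v

/-- The pairing property: every even profile admits a perfect pairing. -/
def PairingProperty (G : SimpleGraph V) : Prop :=
  ∀ π : Multiset V, Even (Multiset.card π) → HasPerfectPairing G π

/-- The double-pairing property: for every profile `π` the double profile `ππ`
admits a perfect pairing. -/
def DoublePairingProperty (G : SimpleGraph V) : Prop :=
  ∀ π : Multiset V, HasPerfectPairing G (π + π)

/-- A half-ball: the intersection of the ball `B_r(v)` with a color class of the
2-coloring `c`. -/
def halfBall (G : SimpleGraph V) (c : V → Bool) (v : V) (r : ℕ) (b : Bool) : Set V :=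
  {x | G.dist v x ≤ r ∧ c x = b}

/-- A bipartite Helly graph: a connected bipartite graph in which the family of
half-balls has the Helly property (every finite family of pairwise intersecting
half-balls has a common vertex). -/
def IsBipartiteHelly (G : SimpleGraph V) : Prop :=
  G.Connected ∧ ∃ c : V → Bool, (∀ u v : V, G.Adj u v → c u ≠ c v) ∧
    ∀ (n : ℕ) (v : Fin n → V) (r : Fin n → ℕ) (b : Fin n → Bool),
      (∀ i j : Fin n,
        (halfBall G c (v i) (r i) (b i) ∩ halfBall G c (v j) (r j) (b j)).Nonempty) →
      (⋂ i : Fin n, halfBall G c (v i) (r i) (b i)).Nonempty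

/-! ### Auxiliary machinery -/

open SimpleGraph

section Aux

variable {G : SimpleGraph V} {c : V → Bool}

/-- Along any walk there is a vertex at prescribed distance from the start. -/
lemma exists_walk_getVert_le (p : G.Walk x y) (s : ℕ) :
    ∃ w : G.Walk x (p.getVert s), w.length ≤ s := by
  induction p generalizing s with
  | nil =>
    exact ⟨(Walk.nil).copy rfl (Walk.getVert_of_length_le _ (by simp)).symm, by simp⟩
  | cons h q ih =>
    cases s with
    | zero => exact ⟨(Walk.nil).copy rfl (Walk.getVert_zero _).symm, by simp⟩
    | succ s =>
      obtain ⟨w, hw⟩ := ih s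
      refine ⟨(w.cons h).copy rfl (Walk.getVert_cons_succ _ _).symm, ?_⟩
      simpa using Nat.succ_le_succ hw

lemma exists_walk_getVert_ge (p : G.Walk x y) (s : ℕ) :
    ∃ w : G.Walk (p.getVert s) y, w.length ≤ p.length - s := by
  induction p generalizing s with
  | nil =>
    exact ⟨(Walk.nil).copy (Walk.getVert_of_length_le _ (by simp)).symm rfl, by simp⟩
  | cons h q ih =>
    cases s with
    | zero =>
      exact ⟨((q.cons h)).copy (Walk.getVert_zero _).symm rfl, by simp⟩
    | succ s =>
      obtain ⟨w, hw⟩ := ih s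
      refine ⟨w.copy (Walk.getVert_cons_succ _ _).symm rfl, ?_⟩
      simpa using hw.trans (by omega)

/-- A point on a geodesic at prescribed distance. -/
lemma exists_geodesic_point (hconn : G.Connected) {x y : V} {s : ℕ} (hs : s ≤ G.dist x y) :
    ∃ z, G.dist x z = s ∧ G.dist x z + G.dist z y = G.dist x y := by
  obtain ⟨p, hp⟩ := hconn.exists_walk_length_eq_dist x y
  refine ⟨p.getVert s, ?_⟩
  obtain ⟨w1, hw1⟩ := exists_walk_getVert_le p s
  obtain ⟨w2, hw2⟩ := exists_walk_getVert_ge p s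
  have d1 : G.dist x (p.getVert s) ≤ s := (SimpleGraph.dist_le w1).trans hw1
  have d2 : G.dist (p.getVert s) y ≤ p.length - s := (SimpleGraph.dist_le w2).trans hw2
  have tri : G.dist x y ≤ G.dist x (p.getVert s) + G.dist (p.getVert s) y :=
    hconn.dist_triangle
  omega

/-- A neighbour of `v` one step closer to `m`. -/
lemma exists_adj_closer (hconn : G.Connected) {v m : V} {k : ℕ} (h : G.dist v m = k + 1) :
    ∃ w, G.Adj v w ∧ G.dist w m = k := by
  obtain ⟨p, hp⟩ := hconn.exists_walk_length_eq_dist v m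
  have hnil : ¬ p.Nil := by
    rw [SimpleGraph.Walk.not_nil_iff_lt_length]; omega
  have hadj : G.Adj v (p.getVert 1) := Walk.adj_snd hnil
  refine ⟨p.getVert 1, hadj, ?_⟩
  obtain ⟨w2, hw2⟩ := exists_walk_getVert_ge p 1
  have d2 : G.dist (p.getVert 1) m ≤ p.length - 1 := (SimpleGraph.dist_le w2).trans hw2
  have d1 : G.dist v (p.getVert 1) = 1 := SimpleGraph.dist_eq_one_iff_adj.2 hadj
  have tri : G.dist v m ≤ G.dist v (p.getVert 1) + G.dist (p.getVert 1) m :=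
    hconn.dist_triangle
  omega

lemma walk_parity (hc : ∀ u v, G.Adj u v → c u ≠ c v) (p : G.Walk x y) :
    (c x = c y) ↔ Even p.length := by
  induction p with
  | nil => simp
  | @cons x v y h q ih =>
    have hne : c x ≠ c v := hc _ _ h
    simp only [Walk.length_cons, Nat.even_add_one, ← ih]
    cases hx : c x <;> cases hv : c v <;> cases hy : c y <;> simp_all

lemma color_dist (hconn : G.Connected) (hc : ∀ u v, G.Adj u v → c u ≠ c v) (x y : V) :
    (c x = c y) ↔ Even (G.dist x y) := by
  obtain ⟨p, hp⟩ := hconn.exists_walk_length_eq_dist x y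
  rw [← hp]; exact walk_parity hc p

/-- Helly property for a finite list of half-balls of a common colour. -/
lemma helly_list
    (hH : ∀ (n : ℕ) (v : Fin n → V) (r : Fin n → ℕ) (b : Fin n → Bool),
      (∀ i j, (halfBall G c (v i) (r i) (b i) ∩ halfBall G c (v j) (r j) (b j)).Nonempty) →
      (⋂ i, halfBall G c (v i) (r i) (b i)).Nonempty)
    (b : Bool) (L : List (V × ℕ)) (hne : L ≠ [])
    (h : ∀ p ∈ L, ∀ q ∈ L, ∃ z, G.dist p.1 z ≤ p.2 ∧ G.dist q.1 z ≤ q.2 ∧ c z = b) :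
    ∃ z, c z = b ∧ ∀ p ∈ L, G.dist p.1 z ≤ p.2 := by
  have hx := hH L.length (fun i => (L.get i).1) (fun i => (L.get i).2) (fun _ => b) ?_
  · obtain ⟨z, hz⟩ := hx
    simp only [Set.mem_iInter] at hz
    have hpos : 0 < L.length := List.length_pos_iff.mpr hne
    refine ⟨z, (hz ⟨0, hpos⟩).2, ?_⟩
    intro p hp
    obtain ⟨i, hi⟩ := List.mem_iff_get.mp hp
    have := (hz i).1
    rw [hi] at this
    exact this
  · intro i j
    obtain ⟨z, h1, h2, h3⟩ := h _ (List.get_mem L i) _ (List.get_mem L j)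
    exact ⟨z, ⟨h1, h3⟩, ⟨h2, h3⟩⟩


lemma decide_odd_add (m n : ℕ) :
    decide (Odd (m + n)) = xor (decide (Odd m)) (decide (Odd n)) := by
  simp only [Nat.odd_iff]
  have h1 : m % 2 = 0 ∨ m % 2 = 1 := by omega
  have h2 : n % 2 = 0 ∨ n % 2 = 1 := by omega
  rcases h1 with h1 | h1 <;> rcases h2 with h2 | h2 <;>
    simp [Nat.add_mod, h1, h2]

lemma xor_cancel3 (p q r : Bool) : xor p (xor (xor q p) r) = xor q r := by
  cases p <;> cases q <;> cases r <;> rfl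

lemma color_at (hconn : G.Connected) (hc : ∀ u v, G.Adj u v → c u ≠ c v)
    {x z : V} {s : ℕ} (h : G.dist x z = s) :
    c z = xor (decide (Odd s)) (c x) := by
  have h2 := color_dist hconn hc x z
  rw [h] at h2
  rcases Nat.even_or_odd s with hs | hs
  · have : c x = c z := h2.mpr hs
    simp [Nat.not_odd_iff_even.mpr hs, ← this]
  · have : c x ≠ c z := fun hcc => (Nat.not_even_iff_odd.mpr hs) (h2.mp hcc)
    cases hx : c x <;> cases hz : c z <;> simp_all [hs]

/-- If `v` is not between `a` and `b`, some neighbour of `v` is closer to both. -/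
lemma exists_common_closer (hconn : G.Connected) (hc : ∀ u v, G.Adj u v → c u ≠ c v)
    (hH : ∀ (n : ℕ) (v : Fin n → V) (r : Fin n → ℕ) (b : Fin n → Bool),
      (∀ i j, (halfBall G c (v i) (r i) (b i) ∩ halfBall G c (v j) (r j) (b j)).Nonempty) →
      (⋂ i, halfBall G c (v i) (r i) (b i)).Nonempty)
    {v a b' : V} (hnb : G.dist a v + G.dist v b' ≠ G.dist a b') :
    ∃ w, G.Adj v w ∧ G.dist w a + 1 = G.dist v a ∧ G.dist w b' + 1 = G.dist v b' := by
  have tri1 : G.dist a b' ≤ G.dist a v + G.dist v b' := hconn.dist_triangle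
  have tri2 : G.dist v a ≤ G.dist v b' + G.dist b' a := hconn.dist_triangle
  have tri3 : G.dist v b' ≤ G.dist v a + G.dist a b' := hconn.dist_triangle
  have cva : G.dist v a = G.dist a v := SimpleGraph.dist_comm
  have cvb : G.dist v b' = G.dist b' v := SimpleGraph.dist_comm
  have cab : G.dist a b' = G.dist b' a := SimpleGraph.dist_comm
  -- parity
  have hva : (c v = c a) ↔ G.dist v a % 2 = 0 := by rw [color_dist hconn hc, Nat.even_iff]
  have hvb : (c v = c b') ↔ G.dist v b' % 2 = 0 := by rw [color_dist hconn hc, Nat.even_iff]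
  have hab : (c a = c b') ↔ G.dist a b' % 2 = 0 := by rw [color_dist hconn hc, Nat.even_iff]
  have hpar : (G.dist v a + G.dist v b' + G.dist a b') % 2 = 0 := by
    cases h1 : c v <;> cases h2 : c a <;> cases h3 : c b' <;>
      simp [h1, h2, h3] at hva hvb hab <;> omega
  obtain ⟨rv, ra, rb, hra, hrb, hrab, hrv1⟩ :
      ∃ rv ra rb, G.dist v a = rv + ra ∧ G.dist v b' = rv + rb ∧
        G.dist a b' = ra + rb ∧ 1 ≤ rv := by
    refine ⟨(G.dist v a + G.dist v b' - G.dist a b') / 2,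
      G.dist v a - (G.dist v a + G.dist v b' - G.dist a b') / 2,
      G.dist v b' - (G.dist v a + G.dist v b' - G.dist a b') / 2, ?_, ?_, ?_, ?_⟩ <;> omega
  -- the three half-balls
  have gva : ∃ z, G.dist v z = rv ∧ G.dist v z + G.dist z a = G.dist v a :=
    exists_geodesic_point hconn (by omega)
  have gvb : ∃ z, G.dist v z = rv ∧ G.dist v z + G.dist z b' = G.dist v b' :=
    exists_geodesic_point hconn (by omega)
  have gab : ∃ z, G.dist a z = ra ∧ G.dist a z + G.dist z b' = G.dist a b' :=
    exists_geodesic_point hconn (by omega)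
  obtain ⟨z1, hz11, hz12⟩ := gva
  obtain ⟨z2, hz21, hz22⟩ := gvb
  obtain ⟨z3, hz31, hz32⟩ := gab
  set b0 : Bool := xor (decide (Odd rv)) (c v) with hb0
  have cz1 : c z1 = b0 := (color_at hconn hc hz11).trans hb0.symm
  have cz2 : c z2 = b0 := (color_at hconn hc hz21).trans hb0.symm
  have cz3 : c z3 = b0 := by
    have hca : c a = xor (decide (Odd (rv + ra))) (c v) := color_at hconn hc hra
    rw [color_at hconn hc hz31, hca, decide_odd_add, hb0]
    exact xor_cancel3 _ _ _
  have hL := helly_list hH b0 [(v, rv), (a, ra), (b', rb)] (by simp) ?_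
  · obtain ⟨z, hcz, hz⟩ := hL
    have e1 : G.dist v z ≤ rv := hz (v, rv) (by simp)
    have e2 : G.dist a z ≤ ra := hz (a, ra) (by simp)
    have e3 : G.dist b' z ≤ rb := hz (b', rb) (by simp)
    have t1 : G.dist v a ≤ G.dist v z + G.dist z a := hconn.dist_triangle
    have t2 : G.dist v b' ≤ G.dist v z + G.dist z b' := hconn.dist_triangle
    have t3 : G.dist a b' ≤ G.dist a z + G.dist z b' := hconn.dist_triangle
    have c1 : G.dist z a = G.dist a z := SimpleGraph.dist_comm
    have c2 : G.dist z b' = G.dist b' z := SimpleGraph.dist_comm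
    have hvz : G.dist v z = rv := by omega
    have hza : G.dist z a = ra := by omega
    have hzb : G.dist z b' = rb := by omega
    obtain ⟨k, hk⟩ : ∃ k, rv = k + 1 := ⟨rv - 1, by omega⟩
    obtain ⟨w, hw1, hw2⟩ := exists_adj_closer hconn (hk ▸ hvz)
    have t4 : G.dist w a ≤ G.dist w z + G.dist z a := hconn.dist_triangle
    have t5 : G.dist w b' ≤ G.dist w z + G.dist z b' := hconn.dist_triangle
    have t6 : G.dist v a ≤ G.dist v w + G.dist w a := hconn.dist_triangle
    have t7 : G.dist v b' ≤ G.dist v w + G.dist w b' := hconn.dist_triangle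
    have hvw : G.dist v w = 1 := SimpleGraph.dist_eq_one_iff_adj.2 hw1
    exact ⟨w, hw1, by omega, by omega⟩
  · -- pairwise intersections
    intro p hp q hq
    have hp' : p = (v, rv) ∨ p = (a, ra) ∨ p = (b', rb) := by simpa using hp
    have hq' : q = (v, rv) ∨ q = (a, ra) ∨ q = (b', rb) := by simpa using hq
    clear hp hq
    have w1 : G.dist v z1 ≤ rv ∧ G.dist a z1 ≤ ra ∧ c z1 = b0 :=
      ⟨by omega, by rw [SimpleGraph.dist_comm]; omega, cz1⟩
    have w2 : G.dist v z2 ≤ rv ∧ G.dist b' z2 ≤ rb ∧ c z2 = b0 :=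
      ⟨by omega, by rw [SimpleGraph.dist_comm]; omega, cz2⟩
    have w3 : G.dist a z3 ≤ ra ∧ G.dist b' z3 ≤ rb ∧ c z3 = b0 :=
      ⟨by omega, by rw [SimpleGraph.dist_comm]; omega, cz3⟩
    rcases hp' with hp' | hp' | hp' <;> rcases hq' with hq' | hq' | hq' <;> subst hp' <;> subst hq'
    · exact ⟨z1, w1.1, w1.1, cz1⟩
    · exact ⟨z1, w1.1, w1.2.1, cz1⟩
    · exact ⟨z2, w2.1, w2.2.1, cz2⟩
    · exact ⟨z1, w1.2.1, w1.1, cz1⟩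
    · exact ⟨z1, w1.2.1, w1.2.1, cz1⟩
    · exact ⟨z3, w3.1, w3.2.1, cz3⟩
    · exact ⟨z2, w2.2.1, w2.1, cz2⟩
    · exact ⟨z3, w3.2.1, w3.1, cz3⟩
    · exact ⟨z2, w2.2.1, w2.2.1, cz2⟩


/-- The Helly property of half-balls, as a predicate. -/
def HellyProp (G : SimpleGraph V) (c : V → Bool) : Prop :=
  ∀ (n : ℕ) (v : Fin n → V) (r : Fin n → ℕ) (b : Fin n → Bool),
    (∀ i j, (halfBall G c (v i) (r i) (b i) ∩ halfBall G c (v j) (r j) (b j)).Nonempty) →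
    (⋂ i, halfBall G c (v i) (r i) (b i)).Nonempty

lemma bool_trans_ne {a b d : Bool} (h1 : a ≠ b) (h2 : b ≠ d) : a = d := by
  cases a <;> cases b <;> cases d <;> simp_all

lemma parity3 (hconn : G.Connected) (hc : ∀ u v, G.Adj u v → c u ≠ c v) (x y z : V) :
    (G.dist x y + G.dist x z + G.dist y z) % 2 = 0 := by
  have hva : (c x = c y) ↔ G.dist x y % 2 = 0 := by rw [color_dist hconn hc, Nat.even_iff]
  have hvb : (c x = c z) ↔ G.dist x z % 2 = 0 := by rw [color_dist hconn hc, Nat.even_iff]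
  have hab : (c y = c z) ↔ G.dist y z % 2 = 0 := by rw [color_dist hconn hc, Nat.even_iff]
  cases h1 : c x <;> cases h2 : c y <;> cases h3 : c z <;>
    simp [h1, h2, h3] at hva hvb hab <;> omega

/-- `v` lies between `a` and `b` iff no neighbour of `v` is closer to both. -/
lemma between_iff (hconn : G.Connected) (hc : ∀ u v, G.Adj u v → c u ≠ c v)
    (hH : HellyProp G c) (v a b' : V) :
    G.dist a v + G.dist v b' = G.dist a b' ↔
      ∀ w, G.Adj v w → ¬(G.dist w a < G.dist v a ∧ G.dist w b' < G.dist v b') := by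
  constructor
  · rintro hbet w hw ⟨h1, h2⟩
    have t : G.dist a b' ≤ G.dist a w + G.dist w b' := hconn.dist_triangle
    have c1 : G.dist a w = G.dist w a := SimpleGraph.dist_comm
    have c2 : G.dist a v = G.dist v a := SimpleGraph.dist_comm
    have t2 : G.dist v a ≤ G.dist v w + G.dist w a := hconn.dist_triangle
    have t3 : G.dist v b' ≤ G.dist v w + G.dist w b' := hconn.dist_triangle
    have hvw : G.dist v w = 1 := SimpleGraph.dist_eq_one_iff_adj.2 hw
    omega
  · intro h
    by_contra hne
    obtain ⟨w, hw, h1, h2⟩ := exists_common_closer hconn hc hH hne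
    exact h w hw ⟨by omega, by omega⟩

/-- Projection of a far vertex to the ball of radius 2 around `v`, keeping
all the "gates" of `x` at `v`. -/
lemma exists_projection [Fintype V] (hconn : G.Connected)
    (hc : ∀ u v, G.Adj u v → c u ≠ c v) (hH : HellyProp G c)
    {v x : V} (h3 : 3 ≤ G.dist v x) :
    ∃ p, G.dist v p = 2 ∧ G.dist v p + G.dist p x = G.dist v x ∧
      ∀ w, G.Adj v w → G.dist w x < G.dist v x → G.dist w p ≤ 1 := by
  classical
  set dx := G.dist v x with hdx
  -- facts about gates
  have gate : ∀ w, G.Adj v w → G.dist w x < G.dist v x → G.dist w x = dx - 1 := by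
    intro w hw hlt
    have t : G.dist v x ≤ G.dist v w + G.dist w x := hconn.dist_triangle
    have hvw : G.dist v w = 1 := SimpleGraph.dist_eq_one_iff_adj.2 hw
    omega
  -- midpoint at distance 2 from v
  obtain ⟨m2, hm21, hm22⟩ := exists_geodesic_point hconn (show 2 ≤ G.dist v x by omega)
  have cm2 : c m2 = c v := ((color_dist hconn hc v m2).mpr (by rw [hm21]; exact ⟨1, rfl⟩)).symm
  -- the family
  let Sf : Finset V := Finset.univ.filter (fun w => G.Adj v w ∧ G.dist w x < G.dist v x)
  let L : List (V × ℕ) := (Sf.toList.map (fun w => (w, 1))) ++ [(x, dx - 2), (v, 2)]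
  have hmem : ∀ p : V × ℕ, p ∈ L ↔
      ((∃ w ∈ Sf, p = (w, 1)) ∨ p = (x, dx - 2) ∨ p = (v, 2)) := by
    intro p
    simp [L, List.mem_append, List.mem_map, Finset.mem_toList, eq_comm]
  -- witnesses for gates
  have hwit : ∀ w ∈ Sf, ∃ n, G.Adj w n ∧ G.dist n x = dx - 2 ∧ c n = c v := by
    intro w hwmem
    have hw : G.Adj v w ∧ G.dist w x < G.dist v x := by
      simpa [Sf] using hwmem
    have hwx : G.dist w x = (dx - 2) + 1 := by have := gate w hw.1 hw.2; omega
    obtain ⟨n, hn1, hn2⟩ := exists_adj_closer hconn hwx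
    exact ⟨n, hn1, hn2, (bool_trans_ne (hc _ _ hw.1) (hc _ _ hn1)).symm⟩
  have key := helly_list hH (c v) L (by simp [L]) ?_
  · obtain ⟨z, hcz, hz⟩ := key
    have hxz : G.dist x z ≤ dx - 2 := hz (x, dx - 2) ((hmem _).mpr (Or.inr (Or.inl rfl)))
    have hvz : G.dist v z ≤ 2 := hz (v, 2) ((hmem _).mpr (Or.inr (Or.inr rfl)))
    have t : G.dist v x ≤ G.dist v z + G.dist z x := hconn.dist_triangle
    have cc : G.dist z x = G.dist x z := SimpleGraph.dist_comm
    refine ⟨z, by omega, by omega, ?_⟩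
    intro w hw hlt
    have hwmem : w ∈ Sf := by simp [Sf, hw, hlt, ← hdx]
    have := hz (w, 1) ((hmem _).mpr (Or.inl ⟨w, hwmem, rfl⟩))
    simpa using this
  · intro p hp q hq
    rw [hmem] at hp hq
    have hQv : ∀ w ∈ Sf, G.dist w v ≤ 1 := by
      intro w hwmem
      have hw : G.Adj v w ∧ G.dist w x < G.dist v x := by simpa [Sf] using hwmem
      have : G.dist w v = 1 := SimpleGraph.dist_eq_one_iff_adj.2 hw.1.symm
      omega
    have hm2x : G.dist x m2 ≤ dx - 2 := by
      have : G.dist m2 x = G.dist x m2 := SimpleGraph.dist_comm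
      omega
    rcases hp with ⟨w, hwmem, hp⟩ | hp | hp <;> rcases hq with ⟨w', hwmem', hq⟩ | hq | hq <;>
        subst hp <;> subst hq
    · exact ⟨v, by simpa using hQv w hwmem, by simpa using hQv w' hwmem', rfl⟩
    · obtain ⟨n, hn1, hn2, hn3⟩ := hwit w hwmem
      have : G.dist w n = 1 := SimpleGraph.dist_eq_one_iff_adj.2 hn1
      have cxn : G.dist x n = G.dist n x := SimpleGraph.dist_comm
      exact ⟨n, by simp; omega, by simp; omega, hn3⟩
    · exact ⟨v, by simpa using hQv w hwmem, by simp [SimpleGraph.dist_self], rfl⟩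
    · obtain ⟨n, hn1, hn2, hn3⟩ := hwit w' hwmem'
      have : G.dist w' n = 1 := SimpleGraph.dist_eq_one_iff_adj.2 hn1
      have cxn : G.dist x n = G.dist n x := SimpleGraph.dist_comm
      exact ⟨n, by simp; omega, by simp; omega, hn3⟩
    · exact ⟨m2, by simpa using hm2x, by simpa using hm2x, cm2⟩
    · exact ⟨m2, by simpa using hm2x, by simpa using hm21.le, cm2⟩
    · exact ⟨v, by simp [SimpleGraph.dist_self], by simpa using hQv w' hwmem', rfl⟩
    · exact ⟨m2, by simpa using hm21.le, by simpa using hm2x, cm2⟩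
    · exact ⟨v, by simp [SimpleGraph.dist_self], by simp [SimpleGraph.dist_self], rfl⟩

/-- Midpoint of two vertices of a 2-ball, inside the 2-ball. -/
lemma ball_mid (hconn : G.Connected) (hc : ∀ u v, G.Adj u v → c u ≠ c v)
    (hH : HellyProp G c) {u x y : V} (hx : G.dist u x ≤ 2) (hy : G.dist u y ≤ 2)
    (hxy : G.dist x y = 2) :
    ∃ m, G.Adj x m ∧ G.Adj m y ∧ G.dist u m ≤ 2 := by
  obtain ⟨m0, hm01, hm02⟩ := exists_geodesic_point hconn (show 1 ≤ G.dist x y by omega)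
  have ham0 : G.Adj x m0 := SimpleGraph.dist_eq_one_iff_adj.1 hm01
  have ham0' : G.Adj m0 y := SimpleGraph.dist_eq_one_iff_adj.1 (by omega)
  by_cases h1 : G.dist u x ≤ 1
  · have t : G.dist u m0 ≤ G.dist u x + G.dist x m0 := hconn.dist_triangle
    exact ⟨m0, ham0, ham0', by omega⟩
  by_cases h2 : G.dist u y ≤ 1
  · have t : G.dist u m0 ≤ G.dist u y + G.dist y m0 := hconn.dist_triangle
    have : G.dist y m0 = G.dist m0 y := SimpleGraph.dist_comm
    have : G.dist m0 y = 1 := by omega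
    exact ⟨m0, ham0, ham0', by omega⟩
  -- both at distance exactly 2
  have hux : G.dist u x = 2 := by omega
  have huy : G.dist u y = 2 := by omega
  have hcx : c x = c u := ((color_dist hconn hc u x).mpr (by rw [hux]; exact ⟨1, rfl⟩)).symm
  have hcy : c y = c u := ((color_dist hconn hc u y).mpr (by rw [huy]; exact ⟨1, rfl⟩)).symm
  have cm0 : c m0 = !(c u) := by
    have := hc _ _ ham0
    rw [hcx] at this
    cases hcu : c u <;> cases hm : c m0 <;> simp_all
  obtain ⟨n1, hn11, hn12⟩ := exists_adj_closer hconn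
    (show G.dist x u = 1 + 1 by rw [SimpleGraph.dist_comm]; omega)
  obtain ⟨n2, hn21, hn22⟩ := exists_adj_closer hconn
    (show G.dist y u = 1 + 1 by rw [SimpleGraph.dist_comm]; omega)
  have cn1 : c n1 = !(c u) := by
    have := hc _ _ hn11
    rw [hcx] at this
    cases hcu : c u <;> cases hm : c n1 <;> simp_all
  have cn2 : c n2 = !(c u) := by
    have := hc _ _ hn21
    rw [hcy] at this
    cases hcu : c u <;> cases hm : c n2 <;> simp_all
  have dxn1 : G.dist x n1 = 1 := SimpleGraph.dist_eq_one_iff_adj.2 hn11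
  have dyn2 : G.dist y n2 = 1 := SimpleGraph.dist_eq_one_iff_adj.2 hn21
  have dun1 : G.dist u n1 = 1 := by rw [SimpleGraph.dist_comm]; exact hn12
  have dun2 : G.dist u n2 = 1 := by rw [SimpleGraph.dist_comm]; exact hn22
  have dym0 : G.dist y m0 = 1 := by rw [SimpleGraph.dist_comm]; omega
  have key := helly_list hH (!(c u)) [(x, 1), (y, 1), (u, 2)] (by simp) ?_
  · obtain ⟨z, hcz, hz⟩ := key
    have e1 : G.dist x z ≤ 1 := hz (x, 1) (by simp)
    have e2 : G.dist y z ≤ 1 := hz (y, 1) (by simp)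
    have e3 : G.dist u z ≤ 2 := hz (u, 2) (by simp)
    have hzx : z ≠ x := by
      intro h; rw [h, hcx] at hcz; simp at hcz
    have hzy : z ≠ y := by
      intro h; rw [h, hcy] at hcz; simp at hcz
    have e1' : G.dist x z = 1 := by
      rcases Nat.lt_or_ge (G.dist x z) 1 with h | h
      · exfalso; exact hzx (((hconn.dist_eq_zero_iff).mp (by omega)).symm)
      · omega
    have e2' : G.dist y z = 1 := by
      rcases Nat.lt_or_ge (G.dist y z) 1 with h | h
      · exfalso; exact hzy (((hconn.dist_eq_zero_iff).mp (by omega)).symm)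
      · omega
    exact ⟨z, SimpleGraph.dist_eq_one_iff_adj.1 e1',
      (SimpleGraph.dist_eq_one_iff_adj.1 e2').symm, e3⟩
  · intro p hp q hq
    have hp' : p = (x, 1) ∨ p = (y, 1) ∨ p = (u, 2) := by simpa using hp
    have hq' : q = (x, 1) ∨ q = (y, 1) ∨ q = (u, 2) := by simpa using hq
    clear hp hq
    have w1 : G.dist x m0 ≤ 1 ∧ G.dist y m0 ≤ 1 ∧ c m0 = !(c u) := ⟨by omega, by omega, cm0⟩
    have w2 : G.dist x n1 ≤ 1 ∧ G.dist u n1 ≤ 2 ∧ c n1 = !(c u) := ⟨by omega, by omega, cn1⟩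
    have w3 : G.dist y n2 ≤ 1 ∧ G.dist u n2 ≤ 2 ∧ c n2 = !(c u) := ⟨by omega, by omega, cn2⟩
    rcases hp' with hp' | hp' | hp' <;> rcases hq' with hq' | hq' | hq' <;>
      subst hp' <;> subst hq'
    · exact ⟨m0, w1.1, w1.1, cm0⟩
    · exact ⟨m0, w1.1, w1.2.1, cm0⟩
    · exact ⟨n1, w2.1, w2.2.1, cn1⟩
    · exact ⟨m0, w1.2.1, w1.1, cm0⟩
    · exact ⟨m0, w1.2.1, w1.2.1, cm0⟩
    · exact ⟨n2, w3.1, w3.2.1, cn2⟩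
    · exact ⟨n1, w2.2.1, w2.1, cn1⟩
    · exact ⟨n2, w3.2.1, w3.1, cn2⟩
    · exact ⟨n1, w2.2.1, w2.2.1, cn1⟩


lemma induce_adj_iff {s : Set V} {a b : s} : (G.induce s).Adj a b ↔ G.Adj a.1 b.1 :=
  Iff.rfl

/-- The ball of radius 2 is isometrically embedded. -/
lemma ball_dist_eq (hconn : G.Connected) (hc : ∀ u v, G.Adj u v → c u ≠ c v)
    (hH : HellyProp G c) (u : V) (x y : {z : V | G.dist u z ≤ 2}) :
    (G.induce {z : V | G.dist u z ≤ 2}).dist x y = G.dist x.1 y.1 := by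
  let s : Set V := {z : V | G.dist u z ≤ 2}
  have hx : G.dist u x.1 ≤ 2 := x.2
  have hy : G.dist u y.1 ≤ 2 := y.2
  have hus : u ∈ s := by
    show G.dist u u ≤ 2
    simp [SimpleGraph.dist_self]
  have tri : G.dist x.1 y.1 ≤ G.dist x.1 u + G.dist u y.1 := hconn.dist_triangle
  have cxu : G.dist x.1 u = G.dist u x.1 := SimpleGraph.dist_comm
  -- a walk inside the ball realizing the distance
  have hwalk : ∃ q : (G.induce s).Walk x y, q.length = G.dist x.1 y.1 := by
    have hd4 : G.dist x.1 y.1 ≤ 4 := by omega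
    -- case on the distance
    rcases Nat.lt_or_ge (G.dist x.1 y.1) 1 with h0 | h1
    · -- distance 0
      have : x.1 = y.1 := (hconn.dist_eq_zero_iff).mp (by omega)
      have hxy : x = y := Subtype.ext this
      subst hxy
      exact ⟨Walk.nil, by simp [SimpleGraph.dist_self]⟩
    rcases Nat.lt_or_ge (G.dist x.1 y.1) 2 with h0 | h2
    · -- distance 1
      have hadj : G.Adj x.1 y.1 := SimpleGraph.dist_eq_one_iff_adj.1 (by omega)
      exact ⟨Walk.cons (by exact hadj : (G.induce s).Adj x y) Walk.nil, by change 1 = G.dist x.1 y.1; omega⟩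
    rcases Nat.lt_or_ge (G.dist x.1 y.1) 3 with h0 | h3
    · -- distance 2
      obtain ⟨m, hm1, hm2, hm3⟩ := ball_mid hconn hc hH hx hy (by omega)
      refine ⟨Walk.cons (by exact hm1 : (G.induce s).Adj x ⟨m, hm3⟩)
        (Walk.cons (by exact hm2 : (G.induce s).Adj ⟨m, hm3⟩ y) Walk.nil), by change 2 = G.dist x.1 y.1; omega⟩
    rcases Nat.lt_or_ge (G.dist x.1 y.1) 4 with h0 | h4
    · -- distance 3
      have hpar := parity3 hconn hc u x.1 y.1
      have cyu : G.dist y.1 u = G.dist u y.1 := SimpleGraph.dist_comm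
      have hsum : G.dist u x.1 + G.dist u y.1 = 3 := by omega
      rcases Nat.lt_or_ge (G.dist u x.1) 2 with ha | ha
      · -- d(u,x) = 1, d(u,y) = 2
        have hux1 : G.dist u x.1 = 1 := by omega
        have huy2 : G.dist u y.1 = 2 := by omega
        have hadj : G.Adj x.1 u := SimpleGraph.dist_eq_one_iff_adj.1 (by omega)
        obtain ⟨m, hm1, hm2⟩ := exists_geodesic_point hconn (show 1 ≤ G.dist u y.1 by omega)
        have hmadj : G.Adj u m := SimpleGraph.dist_eq_one_iff_adj.1 hm1
        have hmadj' : G.Adj m y.1 := SimpleGraph.dist_eq_one_iff_adj.1 (by omega)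
        have hms : m ∈ s := by show G.dist u m ≤ 2; omega
        refine ⟨Walk.cons (by exact hadj : (G.induce s).Adj x ⟨u, hus⟩)
          (Walk.cons (by exact hmadj : (G.induce s).Adj ⟨u, hus⟩ ⟨m, hms⟩)
          (Walk.cons (by exact hmadj' : (G.induce s).Adj ⟨m, hms⟩ y) Walk.nil)), by change 3 = G.dist x.1 y.1; omega⟩
      · -- d(u,x) = 2, d(u,y) = 1
        have hux1 : G.dist u x.1 = 2 := by omega
        have huy2 : G.dist u y.1 = 1 := by omega
        have hadj : G.Adj u y.1 := SimpleGraph.dist_eq_one_iff_adj.1 (by omega)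
        obtain ⟨m, hm1, hm2⟩ := exists_geodesic_point hconn (show 1 ≤ G.dist x.1 u by omega)
        have hmadj : G.Adj x.1 m := SimpleGraph.dist_eq_one_iff_adj.1 hm1
        have hmadj' : G.Adj m u := SimpleGraph.dist_eq_one_iff_adj.1 (by omega)
        have hms : m ∈ s := by
          show G.dist u m ≤ 2
          have : G.dist u m ≤ G.dist u x.1 + G.dist x.1 m := hconn.dist_triangle
          have hmu : G.dist m u = 1 := by omega
          have : G.dist u m = G.dist m u := SimpleGraph.dist_comm
          omega
        refine ⟨Walk.cons (by exact hmadj : (G.induce s).Adj x ⟨m, hms⟩)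
          (Walk.cons (by exact hmadj' : (G.induce s).Adj ⟨m, hms⟩ ⟨u, hus⟩)
          (Walk.cons (by exact hadj : (G.induce s).Adj ⟨u, hus⟩ y) Walk.nil)), by change 3 = G.dist x.1 y.1; omega⟩
    · -- distance 4
      have hd : G.dist x.1 y.1 = 4 := by omega
      have cyu : G.dist y.1 u = G.dist u y.1 := SimpleGraph.dist_comm
      have hux2 : G.dist u x.1 = 2 := by omega
      have huy2 : G.dist u y.1 = 2 := by omega
      obtain ⟨m1, hm11, hm12⟩ := exists_geodesic_point hconn (show 1 ≤ G.dist x.1 u by omega)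
      obtain ⟨m2, hm21, hm22⟩ := exists_geodesic_point hconn (show 1 ≤ G.dist u y.1 by omega)
      have ha1 : G.Adj x.1 m1 := SimpleGraph.dist_eq_one_iff_adj.1 hm11
      have ha2 : G.Adj m1 u := SimpleGraph.dist_eq_one_iff_adj.1 (by omega)
      have ha3 : G.Adj u m2 := SimpleGraph.dist_eq_one_iff_adj.1 hm21
      have ha4 : G.Adj m2 y.1 := SimpleGraph.dist_eq_one_iff_adj.1 (by omega)
      have hm1s : m1 ∈ s := by
        show G.dist u m1 ≤ 2
        have : G.dist u m1 = G.dist m1 u := SimpleGraph.dist_comm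
        omega
      have hm2s : m2 ∈ s := by show G.dist u m2 ≤ 2; omega
      refine ⟨Walk.cons (by exact ha1 : (G.induce s).Adj x ⟨m1, hm1s⟩)
        (Walk.cons (by exact ha2 : (G.induce s).Adj ⟨m1, hm1s⟩ ⟨u, hus⟩)
        (Walk.cons (by exact ha3 : (G.induce s).Adj ⟨u, hus⟩ ⟨m2, hm2s⟩)
        (Walk.cons (by exact ha4 : (G.induce s).Adj ⟨m2, hm2s⟩ y) Walk.nil))), by change 4 = G.dist x.1 y.1; omega⟩
  obtain ⟨q, hq⟩ := hwalk
  have hle : (G.induce s).dist x y ≤ G.dist x.1 y.1 := hq ▸ SimpleGraph.dist_le q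
  have hge : G.dist x.1 y.1 ≤ (G.induce s).dist x y := by
    obtain ⟨p, hp⟩ := (Walk.reachable q).exists_walk_length_eq_dist
    have h2 := SimpleGraph.dist_le (p.map (SimpleGraph.Embedding.induce s).toHom)
    rw [Walk.length_map] at h2
    exact le_trans (le_of_eq rfl) (hp ▸ h2)
  exact le_antisymm hle hge

/-- A median can be pushed into any 2-ball containing the profile. -/
lemma exists_median_in_ball (hconn : G.Connected) (hc : ∀ u v, G.Adj u v → c u ≠ c v)
    (hH : HellyProp G c) (u : V) (π : Multiset V) (hπ : ∀ x ∈ π, G.dist u x ≤ 2) (y : V) :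
    ∃ z, G.dist u z ≤ 2 ∧ ∀ x ∈ π, G.dist z x ≤ G.dist y x := by
  classical
  let L : List (V × ℕ) := (π.toList.map (fun x => (x, G.dist y x))) ++ [(u, 2)]
  have hmem : ∀ p : V × ℕ, p ∈ L ↔ ((∃ x ∈ π, p = (x, G.dist y x)) ∨ p = (u, 2)) := by
    intro p
    simp [L, List.mem_append, List.mem_map, Multiset.mem_toList, eq_comm]
  -- a witness inside a half-ball around any profile element and the ball around u
  have hwit : ∀ x ∈ π, ∃ n, G.dist x n ≤ G.dist y x ∧ G.dist u n ≤ 2 ∧ c n = c y := by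
    intro x hxπ
    have hcyx : G.dist y x = G.dist x y := SimpleGraph.dist_comm
    by_cases hcx : c x = c y
    · exact ⟨x, by simp [SimpleGraph.dist_self], hπ x hxπ, hcx⟩
    · have hyx0 : G.dist x y ≠ 0 := fun h0 =>
        hcx ((color_dist hconn hc x y).mpr (by rw [h0]; exact ⟨0, rfl⟩))
      by_cases hux : G.dist u x ≤ 1
      · obtain ⟨k, hk⟩ : ∃ k, G.dist x y = k + 1 := ⟨G.dist x y - 1, by omega⟩
        obtain ⟨n, hn1, hn2⟩ := exists_adj_closer hconn hk
        have hdxn : G.dist x n = 1 := SimpleGraph.dist_eq_one_iff_adj.2 hn1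
        have ht : G.dist u n ≤ G.dist u x + G.dist x n := hconn.dist_triangle
        exact ⟨n, by omega, by omega, bool_trans_ne (hc _ _ hn1).symm hcx⟩
      · have hux2 : G.dist x u = 1 + 1 := by
          rw [SimpleGraph.dist_comm]
          have := hπ x hxπ
          omega
        obtain ⟨n, hn1, hn2⟩ := exists_adj_closer hconn hux2
        have hdxn : G.dist x n = 1 := SimpleGraph.dist_eq_one_iff_adj.2 hn1
        have hun : G.dist u n = 1 := by rw [SimpleGraph.dist_comm]; exact hn2
        exact ⟨n, by omega, by omega, bool_trans_ne (hc _ _ hn1).symm hcx⟩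
  have huwit : ∃ n, G.dist u n ≤ 2 ∧ c n = c y := by
    by_cases hcu : c u = c y
    · exact ⟨u, by simp [SimpleGraph.dist_self], hcu⟩
    · have h0 : G.dist u y ≠ 0 := fun h0 =>
        hcu ((color_dist hconn hc u y).mpr (by rw [h0]; exact ⟨0, rfl⟩))
      obtain ⟨k, hk⟩ : ∃ k, G.dist u y = k + 1 := ⟨G.dist u y - 1, by omega⟩
      obtain ⟨n, hn1, hn2⟩ := exists_adj_closer hconn hk
      have : G.dist u n = 1 := SimpleGraph.dist_eq_one_iff_adj.2 hn1
      exact ⟨n, by omega, bool_trans_ne (hc _ _ hn1).symm hcu⟩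
  have key := helly_list hH (c y) L (by simp [L]) ?_
  · obtain ⟨z, hcz, hz⟩ := key
    refine ⟨z, ?_, ?_⟩
    · simpa using hz (u, 2) ((hmem _).mpr (Or.inr rfl))
    · intro x hxπ
      have := hz (x, G.dist y x) ((hmem _).mpr (Or.inl ⟨x, hxπ, rfl⟩))
      have hcc : G.dist z x = G.dist x z := SimpleGraph.dist_comm
      simp only at this
      omega
  · intro p hp q hq
    rw [hmem] at hp hq
    rcases hp with ⟨x1, hx1, hp⟩ | hp <;> rcases hq with ⟨x2, hx2, hq⟩ | hq <;>
      subst hp <;> subst hq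
    · have c1 : G.dist x1 y = G.dist y x1 := SimpleGraph.dist_comm
      have c2 : G.dist x2 y = G.dist y x2 := SimpleGraph.dist_comm
      exact ⟨y, by simp; omega, by simp; omega, rfl⟩
    · obtain ⟨n, h1, h2, h3⟩ := hwit x1 hx1
      exact ⟨n, h1, h2, h3⟩
    · obtain ⟨n, h1, h2, h3⟩ := hwit x2 hx2
      exact ⟨n, h2, h1, h3⟩
    · obtain ⟨n, h1, h2⟩ := huwit
      exact ⟨n, h1, h1, h2⟩

end Aux

section MultisetAux

variable {α β : Type*}

lemma sum_map_mono (s : Multiset α) (f g : α → ℕ) (h : ∀ a ∈ s, f a ≤ g a) :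
    (s.map f).sum ≤ (s.map g).sum := by
  induction s using Multiset.induction with
  | empty => simp
  | cons a t ih =>
    simp only [Multiset.map_cons, Multiset.sum_cons]
    exact Nat.add_le_add (h a (Multiset.mem_cons_self a t))
      (ih fun b hb => h b (Multiset.mem_cons_of_mem hb))

lemma eq_of_sum_map_le (s : Multiset α) (f g : α → ℕ) (h : ∀ a ∈ s, f a ≤ g a)
    (hsum : (s.map g).sum ≤ (s.map f).sum) : ∀ a ∈ s, f a = g a := by
  induction s using Multiset.induction with
  | empty => simp
  | cons a t ih =>
    intro b hb
    simp only [Multiset.map_cons, Multiset.sum_cons] at hsum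
    have h1 : f a ≤ g a := h a (Multiset.mem_cons_self a t)
    have h2 : (t.map f).sum ≤ (t.map g).sum :=
      sum_map_mono t f g (fun b hb => h b (Multiset.mem_cons_of_mem hb))
    rcases Multiset.mem_cons.mp hb with rfl | hb'
    · omega
    · exact ih (fun b hb => h b (Multiset.mem_cons_of_mem hb)) (by omega) b hb'

/-- Lift a pairing of the image `π.map f` to a pairing of `π`. -/
lemma pairing_unmap (f : α → β) (P' : Multiset (β × β)) :
    ∀ π : Multiset α, P'.map Prod.fst + P'.map Prod.snd = π.map f →
      ∃ P : Multiset (α × α), (P.map Prod.fst + P.map Prod.snd = π) ∧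
        P.map (Prod.map f f) = P' := by
  classical
  induction P' using Multiset.induction with
  | empty =>
    intro π h
    have h0 : π.map f = 0 := by simpa using h.symm
    have hπ : π = 0 := by simpa using h0
    exact ⟨0, by simp [hπ], by simp⟩
  | cons pq Q ih =>
    intro π h
    have h1 : π.map f = pq.1 ::ₘ (Q.map Prod.fst + (pq.2 ::ₘ Q.map Prod.snd)) := by
      rw [← h, Multiset.map_cons, Multiset.map_cons, Multiset.cons_add]
    obtain ⟨a, ha, haf, ha2⟩ := (Multiset.map_eq_cons f π _ pq.1).mpr h1
    have h2 : (π.erase a).map f = pq.2 ::ₘ (Q.map Prod.fst + Q.map Prod.snd) := by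
      rw [ha2, Multiset.add_cons]
    obtain ⟨b, hb, hbf, hb2⟩ := (Multiset.map_eq_cons f _ _ pq.2).mpr h2
    obtain ⟨P, hP1, hP2⟩ := ih _ hb2.symm
    refine ⟨(a, b) ::ₘ P, ?_, ?_⟩
    · rw [Multiset.map_cons, Multiset.map_cons, Multiset.cons_add, Multiset.add_cons, hP1,
        Multiset.cons_erase hb, Multiset.cons_erase ha]
    · rw [Multiset.map_cons, hP2]
      obtain ⟨p1, p2⟩ := pq
      simp only [Prod.map_apply]
      rw [haf, hbf]

/-- Lift a multiset whose members lie in `s` to a multiset of the subtype. -/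
lemma lift_subtype {s : Set α} (π : Multiset α) (h : ∀ x ∈ π, x ∈ s) :
    ∃ σ : Multiset s, σ.map Subtype.val = π := by
  refine ⟨π.attach.map (fun x => ⟨x.1, h x.1 x.2⟩), ?_⟩
  rw [Multiset.map_map]
  exact Multiset.attach_map_val π

lemma lift_pairs {s : Set α} (P : Multiset (α × α)) (h : ∀ q ∈ P, q.1 ∈ s ∧ q.2 ∈ s) :
    ∃ Q : Multiset (s × s), Q.map (Prod.map Subtype.val Subtype.val) = P := by
  refine ⟨P.attach.map (fun q => (⟨q.1.1, (h q.1 q.2).1⟩, ⟨q.1.2, (h q.1 q.2).2⟩)), ?_⟩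
  rw [Multiset.map_map]
  have he : (Prod.map (Subtype.val : s → α) Subtype.val ∘
      fun q : {x // x ∈ P} => ((⟨q.1.1, (h q.1 q.2).1⟩ : s), (⟨q.1.2, (h q.1 q.2).2⟩ : s)))
      = fun q : {x // x ∈ P} => q.1 := by
    funext q
    simp [Prod.map]
  rw [he, Multiset.attach_map_val]

end MultisetAux

section Main

variable {G : SimpleGraph V} {c : V → Bool}

lemma pairing_sum_split (hconn : G.Connected) {π : Multiset V} {P : Multiset (V × V)}
    (h : P.map Prod.fst + P.map Prod.snd = π) (v : V) :
    (P.map (fun q => G.dist q.1 v + G.dist v q.2)).sum = cost G π v := by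
  rw [Multiset.sum_map_add]
  have e1 : P.map (fun q => G.dist q.1 v) = P.map (fun q => G.dist v q.1) :=
    Multiset.map_congr rfl (fun q _ => SimpleGraph.dist_comm)
  rw [e1]
  have e2 : (P.map (fun q => G.dist v q.1)) = (P.map Prod.fst).map (G.dist v) := by
    rw [Multiset.map_map]; rfl
  have e3 : (P.map (fun q => G.dist v q.2)) = (P.map Prod.snd).map (G.dist v) := by
    rw [Multiset.map_map]; rfl
  rw [e2, e3]
  unfold cost
  rw [← h, Multiset.map_add, Multiset.sum_add]

lemma pairingCost_le_cost (hconn : G.Connected) {π : Multiset V} {P : Multiset (V × V)}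
    (h : P.map Prod.fst + P.map Prod.snd = π) (z : V) :
    pairingCost G P ≤ cost G π z := by
  rw [← pairing_sum_split hconn h z]
  unfold pairingCost
  refine sum_map_mono _ _ _ (fun q _ => ?_)
  have t : G.dist q.1 q.2 ≤ G.dist q.1 z + G.dist z q.2 := hconn.dist_triangle
  exact t

/-- Transfer a perfect pairing from `G` to the 2-ball (global-to-local). -/
lemma transfer (hconn : G.Connected) (hc : ∀ u v, G.Adj u v → c u ≠ c v)
    (hH : HellyProp G c) (u : V) (σ : Multiset {z : V | G.dist u z ≤ 2})
    (h : HasPerfectPairing G (σ.map Subtype.val)) :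
    HasPerfectPairing (G.induce {z : V | G.dist u z ≤ 2}) σ := by
  classical
  obtain ⟨P, y, hpair, hcost⟩ := h
  have hmem : ∀ q ∈ P, q.1 ∈ {z : V | G.dist u z ≤ 2} ∧ q.2 ∈ {z : V | G.dist u z ≤ 2} := by
    intro q hq
    have h1 : q.1 ∈ σ.map Subtype.val := by
      rw [← hpair]
      exact Multiset.mem_add.mpr (Or.inl (Multiset.mem_map_of_mem _ hq))
    have h2 : q.2 ∈ σ.map Subtype.val := by
      rw [← hpair]
      exact Multiset.mem_add.mpr (Or.inr (Multiset.mem_map_of_mem _ hq))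
    obtain ⟨a1, _, e1⟩ := Multiset.mem_map.mp h1
    obtain ⟨a2, _, e2⟩ := Multiset.mem_map.mp h2
    exact ⟨e1 ▸ a1.2, e2 ▸ a2.2⟩
  obtain ⟨Q, hQ⟩ := lift_pairs P hmem
  have hπball : ∀ x ∈ σ.map Subtype.val, G.dist u x ≤ 2 := by
    intro x hx
    obtain ⟨a, _, e⟩ := Multiset.mem_map.mp hx
    exact e ▸ a.2
  obtain ⟨z, hz1, hz2⟩ := exists_median_in_ball hconn hc hH u (σ.map Subtype.val) hπball y
  have hcz : cost G (σ.map Subtype.val) z ≤ cost G (σ.map Subtype.val) y :=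
    sum_map_mono _ _ _ (fun x hx => hz2 x hx)
  have hle : pairingCost G P ≤ cost G (σ.map Subtype.val) z := pairingCost_le_cost hconn hpair z
  have hcz' : pairingCost G P = cost G (σ.map Subtype.val) z := by omega
  -- move to the ball
  refine ⟨Q, ⟨z, hz1⟩, ?_, ?_⟩
  · -- IsPairing σ Q
    unfold IsPairing
    apply Multiset.map_injective (Subtype.val_injective)
    rw [Multiset.map_add, Multiset.map_map, Multiset.map_map]
    have e1 : (Q.map (Subtype.val ∘ Prod.fst)) = (Q.map (Prod.map Subtype.val Subtype.val)).map Prod.fst := by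
      rw [Multiset.map_map]; rfl
    have e2 : (Q.map (Subtype.val ∘ Prod.snd)) = (Q.map (Prod.map Subtype.val Subtype.val)).map Prod.snd := by
      rw [Multiset.map_map]; rfl
    rw [e1, e2, hQ, hpair]
  · -- costs agree
    have hpc : pairingCost (G.induce {z : V | G.dist u z ≤ 2}) Q = pairingCost G P := by
      unfold pairingCost
      rw [← hQ, Multiset.map_map]
      refine congrArg _ (Multiset.map_congr rfl (fun q _ => ?_))
      exact ball_dist_eq hconn hc hH u q.1 q.2
    have hco : cost (G.induce {z : V | G.dist u z ≤ 2}) σ ⟨z, hz1⟩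
        = cost G (σ.map Subtype.val) z := by
      unfold cost
      rw [Multiset.map_map]
      refine congrArg _ (Multiset.map_congr rfl (fun a _ => ?_))
      exact ball_dist_eq hconn hc hH u ⟨z, hz1⟩ a
    rw [hpc, hco, hcz']

/-- Lift a perfect pairing from the 2-ball around a median to `G` (local-to-global). -/
lemma lift_perfect (hconn : G.Connected) (hc : ∀ u v, G.Adj u v → c u ≠ c v)
    (hH : HellyProp G c) (v : V) (π : Multiset V) (p : V → V)
    (hp1 : ∀ x, G.dist v (p x) ≤ 2)
    (hp2 : ∀ x, G.dist v (p x) + G.dist (p x) x = G.dist v x)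
    (hp3 : ∀ x w, G.Adj v w → G.dist w x < G.dist v x → G.dist w (p x) < G.dist v (p x))
    (hv : ∀ z, cost G π v ≤ cost G π z)
    (σ : Multiset {z : V | G.dist v z ≤ 2}) (hσ : σ.map Subtype.val = π.map p)
    (hpp : HasPerfectPairing (G.induce {z : V | G.dist v z ≤ 2}) σ) :
    HasPerfectPairing G π := by
  classical
  obtain ⟨Q, zs, hQpair, hQcost⟩ := hpp
  set z := zs.1 with hzdef
  set Pc := Q.map (Prod.map Subtype.val Subtype.val) with hPcdef
  have hQpair' : Q.map Prod.fst + Q.map Prod.snd = σ := hQpair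
  have hPc : Pc.map Prod.fst + Pc.map Prod.snd = π.map p := by
    have e1 : Pc.map Prod.fst = (Q.map Prod.fst).map Subtype.val := by
      rw [hPcdef, Multiset.map_map, Multiset.map_map]; rfl
    have e2 : Pc.map Prod.snd = (Q.map Prod.snd).map Subtype.val := by
      rw [hPcdef, Multiset.map_map, Multiset.map_map]; rfl
    rw [e1, e2, ← Multiset.map_add, hQpair', hσ]
  -- translate the costs to G
  have hpc : pairingCost G Pc = pairingCost (G.induce {z : V | G.dist v z ≤ 2}) Q := by
    unfold pairingCost
    rw [hPcdef, Multiset.map_map]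
    refine congrArg _ (Multiset.map_congr rfl (fun q _ => ?_))
    exact (ball_dist_eq hconn hc hH v q.1 q.2).symm
  have hco : cost (G.induce {z : V | G.dist v z ≤ 2}) σ zs
      = (π.map (fun x => G.dist z (p x))).sum := by
    unfold cost
    have e0 : σ.map ((G.induce {z : V | G.dist v z ≤ 2}).dist zs)
        = σ.map (fun a => G.dist z a.1) :=
      Multiset.map_congr rfl (fun a _ => ball_dist_eq hconn hc hH v zs a)
    rw [e0]
    have e1 : σ.map (fun a => G.dist z a.1) = (σ.map Subtype.val).map (G.dist z) := by
      rw [Multiset.map_map]; rfl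
    rw [e1, hσ, Multiset.map_map]
    rfl
  -- key inequalities
  have hdefA : ∀ x ∈ π, G.dist z x ≤ G.dist z (p x) + G.dist (p x) x :=
    fun x _ => hconn.dist_triangle
  have sum1 : cost G π z ≤ (π.map (fun x => G.dist z (p x))).sum
      + (π.map (fun x => G.dist (p x) x)).sum := by
    rw [← Multiset.sum_map_add]
    exact sum_map_mono _ _ _ hdefA
  have sum2 : cost G π v = (π.map (fun x => G.dist v (p x))).sum
      + (π.map (fun x => G.dist (p x) x)).sum := by
    rw [← Multiset.sum_map_add]
    exact congrArg _ (Multiset.map_congr rfl (fun x _ => (hp2 x).symm))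
  have hvz : cost G π v ≤ cost G π z := hv z
  have key1 : (π.map (fun x => G.dist v (p x))).sum ≤ (π.map (fun x => G.dist z (p x))).sum := by
    omega
  -- pairing cost of Pc is at most the cost of (π.map p) at v  (with equality)
  have hsplit : (Pc.map (fun q => G.dist q.1 v + G.dist v q.2)).sum
      = cost G (π.map p) v := pairing_sum_split hconn hPc v
  have hcostv : cost G (π.map p) v = (π.map (fun x => G.dist v (p x))).sum := by
    unfold cost
    rw [Multiset.map_map]
    rfl
  have hub : pairingCost G Pc ≤ (Pc.map (fun q => G.dist q.1 v + G.dist v q.2)).sum := by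
    unfold pairingCost
    exact sum_map_mono _ _ _ (fun q _ => hconn.dist_triangle)
  have hlow : (π.map (fun x => G.dist z (p x))).sum = pairingCost G Pc := by
    rw [hpc, hQcost, hco]
  have htight : ∀ q ∈ Pc, G.dist q.1 q.2 = G.dist q.1 v + G.dist v q.2 := by
    refine eq_of_sum_map_le _ _ _ (fun q _ => hconn.dist_triangle) ?_
    rw [hsplit, hcostv]
    show (π.map (fun x => G.dist v (p x))).sum ≤ pairingCost G Pc
    rw [← hlow]
    exact key1
  -- unmap the pairing
  obtain ⟨P, hPpair, hPmap⟩ := pairing_unmap p Pc π hPc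
  have hbet : ∀ q ∈ P, G.dist q.1 v + G.dist v q.2 = G.dist q.1 q.2 := by
    intro q hq
    have hq' : (Prod.map p p q) ∈ Pc := by
      rw [← hPmap]
      exact Multiset.mem_map_of_mem _ hq
    have h1 : G.dist (p q.1) v + G.dist v (p q.2) = G.dist (p q.1) (p q.2) :=
      (htight _ hq').symm
    have h2 := (between_iff hconn hc hH v (p q.1) (p q.2)).mp h1
    refine (between_iff hconn hc hH v q.1 q.2).mpr ?_
    rintro w hw ⟨hw1, hw2⟩
    exact h2 w hw ⟨hp3 q.1 w hw hw1, hp3 q.2 w hw hw2⟩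
  refine ⟨P, v, hPpair, ?_⟩
  unfold pairingCost
  rw [Multiset.map_congr rfl (fun q hq => (hbet q hq).symm)]
  exact pairing_sum_split hconn hPpair v

end Main

/-- Corollary 31 (local-to-global): a bipartite Helly graph satisfies the pairing
property (resp. the double-pairing property) iff every subgraph induced by a ball of
radius 2 (with its own shortest-path metric) satisfies the pairing property
(resp. the double-pairing property). -/
theorem stmt_17 [Fintype V] (G : SimpleGraph V) (hG : IsBipartiteHelly G) :
    (PairingProperty G ↔
      ∀ u : V, PairingProperty (G.induce {x : V | G.dist u x ≤ 2})) ∧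
    (DoublePairingProperty G ↔
      ∀ u : V, DoublePairingProperty (G.induce {x : V | G.dist u x ≤ 2})) := by
  classical
  obtain ⟨hconn, c, hc, hH'⟩ := hG
  have hH : HellyProp G c := hH'
  haveI : Nonempty V := hconn.nonempty
  -- a median together with a projection to its 2-ball
  have proj : ∀ π : Multiset V, ∃ (v : V) (p : V → V),
      (∀ z, cost G π v ≤ cost G π z) ∧ (∀ x, G.dist v (p x) ≤ 2) ∧
      (∀ x, G.dist v (p x) + G.dist (p x) x = G.dist v x) ∧
      (∀ x w, G.Adj v w → G.dist w x < G.dist v x → G.dist w (p x) < G.dist v (p x)) := by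
    intro π
    obtain ⟨v, -, hv⟩ := Finset.exists_min_image Finset.univ (cost G π)
      ⟨Classical.arbitrary V, Finset.mem_univ _⟩
    refine ⟨v, fun x => if h : 3 ≤ G.dist v x then
        Classical.choose (exists_projection hconn hc hH h) else x,
      fun z => hv z (Finset.mem_univ z), ?_, ?_, ?_⟩
    · intro x
      by_cases h : 3 ≤ G.dist v x
      · simp only [dif_pos h]
        exact le_of_eq (Classical.choose_spec (exists_projection hconn hc hH h)).1
      · simp only [dif_neg h]
        omega
    · intro x
      by_cases h : 3 ≤ G.dist v x
      · simp only [dif_pos h]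
        exact (Classical.choose_spec (exists_projection hconn hc hH h)).2.1
      · simp only [dif_neg h]
        simp [SimpleGraph.dist_self]
    · intro x w hw hlt
      by_cases h : 3 ≤ G.dist v x
      · simp only [dif_pos h]
        have spec := Classical.choose_spec (exists_projection hconn hc hH h)
        have h1 := spec.2.2 w hw hlt
        have h2 := spec.1
        omega
      · simp only [dif_neg h]
        exact hlt
  have dirL : (∀ u : V, PairingProperty (G.induce {x : V | G.dist u x ≤ 2})) →
      PairingProperty G := by
    intro hloc π hev
    obtain ⟨v, p, hv, hp1, hp2, hp3⟩ := proj π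
    have hball : ∀ y ∈ π.map p, G.dist v y ≤ 2 := by
      intro y hy
      obtain ⟨x, _, rfl⟩ := Multiset.mem_map.mp hy
      exact hp1 x
    obtain ⟨σ, hσ⟩ := lift_subtype (π.map p) hball
    have hev' : Even (Multiset.card σ) := by
      have hcard : Multiset.card σ = Multiset.card π := by
        rw [← Multiset.card_map Subtype.val σ, hσ, Multiset.card_map]
      rw [hcard]
      exact hev
    exact lift_perfect hconn hc hH v π p hp1 hp2 hp3 hv σ hσ (hloc v σ hev')
  have dirLD : (∀ u : V, DoublePairingProperty (G.induce {x : V | G.dist u x ≤ 2})) →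
      DoublePairingProperty G := by
    intro hloc π
    obtain ⟨v, p, hv, hp1, hp2, hp3⟩ := proj (π + π)
    have hball : ∀ y ∈ π.map p, G.dist v y ≤ 2 := by
      intro y hy
      obtain ⟨x, _, rfl⟩ := Multiset.mem_map.mp hy
      exact hp1 x
    obtain ⟨σ, hσ⟩ := lift_subtype (π.map p) hball
    have hσ2 : (σ + σ).map Subtype.val = (π + π).map p := by
      rw [Multiset.map_add, hσ, Multiset.map_add]
    exact lift_perfect hconn hc hH v (π + π) p hp1 hp2 hp3 hv (σ + σ) hσ2 (hloc v σ)
  refine ⟨⟨?_, dirL⟩, ⟨?_, dirLD⟩⟩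
  · intro hP u σ hev
    refine transfer hconn hc hH u σ (hP _ ?_)
    rw [Multiset.card_map]
    exact hev
  · intro hD u σ
    refine transfer hconn hc hH u (σ + σ) ?_
    rw [Multiset.map_add]
    exact hD (σ.map Subtype.val)

end ArxivABC
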